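/- Let L(ρ) = −i[H,ρ] + Σ_μ D_{L_μ}(ρ) be a Lindblad generator on n×n complex matrices and let ρ̄ be a density matrix with L(ρ̄) = 0. Then for every vector ν ∈ ℂ^n with ρ̄ν = 0 and every index μ, one has √ρ̄ · L_μ† · ν = 0, where √ρ̄ is the positive semidefinite square root of ρ̄. -/

import Mathlib

open scoped Matrix ComplexOrder

/-- The dissipator `D_X(ρ) = XρX† − (1/2)(X†Xρ + ρX†X)`. -/
noncomputable def dissipator {n : ℕ} (X ρ : Matrix (Fin n) (Fin n) ℂ) :
    Matrix (Fin n) (Fin n) ℂ :=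
  X * ρ * Xᴴ - (1 / 2 : ℂ) • (Xᴴ * X * ρ + ρ * (Xᴴ * X))

/-- The positive semidefinite square root of a positive semidefinite matrix (as in the
older Mathlib's `Matrix.PosSemidef.sqrt`, which has since been removed). -/
noncomputable def Matrix.PosSemidef.sqrt {n : ℕ} {A : Matrix (Fin n) (Fin n) ℂ}
    (hA : A.PosSemidef) : Matrix (Fin n) (Fin n) ℂ :=
  hA.1.eigenvectorUnitary.1 * Matrix.diagonal ((↑) ∘ (Real.sqrt ·) ∘ hA.1.eigenvalues) *
  (star hA.1.eigenvectorUnitary : Matrix (Fin n) (Fin n) ℂ)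

lemma Matrix.PosSemidef.sqrt_conjTranspose {n : ℕ} {A : Matrix (Fin n) (Fin n) ℂ}
    (hA : A.PosSemidef) : hA.sqrtᴴ = hA.sqrt := by
  unfold Matrix.PosSemidef.sqrt
  rw [Matrix.conjTranspose_mul, Matrix.conjTranspose_mul, Matrix.diagonal_conjTranspose,
    ← Matrix.star_eq_conjTranspose, star_star, Matrix.star_eq_conjTranspose, Matrix.mul_assoc]
  congr 3
  ext i
  simp

lemma Matrix.PosSemidef.sqrt_mul_self {n : ℕ} {A : Matrix (Fin n) (Fin n) ℂ}
    (hA : A.PosSemidef) : hA.sqrt * hA.sqrt = A := by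
  conv_rhs => rw [hA.1.spectral_theorem, Unitary.conjStarAlgAut_apply]
  unfold Matrix.PosSemidef.sqrt
  have hU : (star hA.1.eigenvectorUnitary : Matrix (Fin n) (Fin n) ℂ) *
      (hA.1.eigenvectorUnitary : Matrix (Fin n) (Fin n) ℂ) = 1 :=
    Unitary.coe_star_mul_self _
  have hD : Matrix.diagonal (((↑) ∘ (Real.sqrt ·) ∘ hA.1.eigenvalues : Fin n → ℂ)) *
      Matrix.diagonal ((↑) ∘ (Real.sqrt ·) ∘ hA.1.eigenvalues) =
      Matrix.diagonal (RCLike.ofReal ∘ hA.1.eigenvalues) := by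
    rw [Matrix.diagonal_mul_diagonal]
    congr 1
    ext i
    simp only [Function.comp_apply]
    rw [← Complex.ofReal_mul, Real.mul_self_sqrt (hA.eigenvalues_nonneg i)]
    rfl
  calc _ = (hA.1.eigenvectorUnitary : Matrix (Fin n) (Fin n) ℂ) *
        Matrix.diagonal ((↑) ∘ (Real.sqrt ·) ∘ hA.1.eigenvalues) *
        ((star hA.1.eigenvectorUnitary : Matrix (Fin n) (Fin n) ℂ) *
        (hA.1.eigenvectorUnitary : Matrix (Fin n) (Fin n) ℂ)) *
        Matrix.diagonal ((↑) ∘ (Real.sqrt ·) ∘ hA.1.eigenvalues) *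
        (star hA.1.eigenvectorUnitary : Matrix (Fin n) (Fin n) ℂ) := by
          simp only [Matrix.mul_assoc]
    _ = _ := by
      rw [hU, Matrix.mul_one, Matrix.mul_assoc _ (Matrix.diagonal _) (Matrix.diagonal _), hD]

lemma sqrt_mulVec_zero {n : ℕ} {A : Matrix (Fin n) (Fin n) ℂ} (hA : A.PosSemidef)
    {x : Fin n → ℂ} (hx : A.mulVec x = 0) : hA.sqrt.mulVec x = 0 := by
  have key : star x ⬝ᵥ A *ᵥ x = star (hA.sqrt *ᵥ x) ⬝ᵥ hA.sqrt *ᵥ x := by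
    rw [Matrix.star_mulVec, ← Matrix.dotProduct_mulVec, Matrix.mulVec_mulVec,
      hA.sqrt_conjTranspose, hA.sqrt_mul_self]
  rw [hx, dotProduct_zero] at key
  exact (dotProduct_star_self_eq_zero).mp key.symm

lemma sum_mulVec' {n m : ℕ} (A : Fin m → Matrix (Fin n) (Fin n) ℂ) (v : Fin n → ℂ) :
    (∑ μ, A μ) *ᵥ v = ∑ μ, A μ *ᵥ v := by
  ext i
  simp only [Matrix.mulVec, dotProduct, Finset.sum_apply, Matrix.sum_apply, Finset.sum_mul]
  rw [Finset.sum_comm]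

lemma dot_sum {n m : ℕ} (u : Fin n → ℂ) (w : Fin m → Fin n → ℂ) :
    u ⬝ᵥ (∑ μ, w μ) = ∑ μ, u ⬝ᵥ w μ := by
  simp only [dotProduct, Finset.sum_apply, Finset.mul_sum]
  rw [Finset.sum_comm]

/-- if `ρ̄` is a density matrix with `L(ρ̄) = 0` for a Lindblad generator
`L(ρ) = −i[H,ρ] + Σ_μ D_{L_μ}(ρ)`, then for every `ν` with `ρ̄ν = 0` and every `μ`,
`√ρ̄ · L_μ† · ν = 0`. -/
theorem stmt3 {n m : ℕ} (H : Matrix (Fin n) (Fin n) ℂ) (hH : H.IsHermitian)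
    (Lop : Fin m → Matrix (Fin n) (Fin n) ℂ)
    (ρbar : Matrix (Fin n) (Fin n) ℂ) (hpsd : ρbar.PosSemidef) (htr : ρbar.trace = 1)
    (hstat : (-Complex.I) • (H * ρbar - ρbar * H) + ∑ μ, dissipator (Lop μ) ρbar = 0)
    (ν : Fin n → ℂ) (hν : ρbar.mulVec ν = 0) (μ : Fin m) :
    (hpsd.sqrt * (Lop μ)ᴴ).mulVec ν = 0 := by
  have hν' : star ν ᵥ* ρbar = 0 := by
    rw [← hpsd.isHermitian.eq, ← Matrix.star_mulVec, hν, star_zero]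
  have hq : ∀ μ', star ν ⬝ᵥ (dissipator (Lop μ') ρbar) *ᵥ ν
      = star ((Lop μ')ᴴ *ᵥ ν) ⬝ᵥ ρbar *ᵥ ((Lop μ')ᴴ *ᵥ ν) := by
    intro μ'
    simp only [dissipator, Matrix.sub_mulVec, Matrix.smul_mulVec, Matrix.add_mulVec,
      dotProduct_sub, dotProduct_smul, dotProduct_add,
      ← Matrix.mulVec_mulVec, hν, Matrix.mulVec_zero, dotProduct_zero]
    rw [Matrix.dotProduct_mulVec _ ρbar, hν', zero_dotProduct,
      Matrix.dotProduct_mulVec _ (Lop μ')]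
    have : star ν ᵥ* (Lop μ') = star ((Lop μ')ᴴ *ᵥ ν) := by
      rw [Matrix.star_mulVec, Matrix.conjTranspose_conjTranspose]
    rw [this]
    simp
  have hsum : ∑ μ', star ((Lop μ')ᴴ *ᵥ ν) ⬝ᵥ ρbar *ᵥ ((Lop μ')ᴴ *ᵥ ν) = 0 := by
    have := congrArg (fun A : Matrix (Fin n) (Fin n) ℂ => star ν ⬝ᵥ A *ᵥ ν) hstat
    simp only [Matrix.add_mulVec, Matrix.smul_mulVec, Matrix.sub_mulVec,
      dotProduct_add, dotProduct_smul,
      dotProduct_sub, Matrix.zero_mulVec, dotProduct_zero] at this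
    rw [sum_mulVec', dot_sum] at this
    rw [← Matrix.mulVec_mulVec, hν, Matrix.mulVec_zero, dotProduct_zero,
      ← Matrix.mulVec_mulVec, Matrix.dotProduct_mulVec _ ρbar, hν',
      zero_dotProduct] at this
    simp only [hq] at this
    simpa using this
  have hz := (Finset.sum_eq_zero_iff_of_nonneg
      (fun μ' _ => hpsd.dotProduct_mulVec_nonneg ((Lop μ')ᴴ *ᵥ ν))).mp hsum μ (Finset.mem_univ μ)
  have hρz : ρbar *ᵥ ((Lop μ)ᴴ *ᵥ ν) = 0 :=
    (hpsd.dotProduct_mulVec_zero_iff _).mp hz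
  rw [← Matrix.mulVec_mulVec]
  exact sqrt_mulVec_zero hpsd hρz
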